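/- Let A and Â be non-negative, self-adjoint, trace-class operators on a separable Hilbert space H, with eigenvalues λ₁ ≥ λ₂ ≥ ... and eigenvectors u_i (resp. λ̂_i, û_i). For r ∈ ℕ, let P̂_r = ∑_{i=1}^r û_i ⊗ û_i. Then Tr(A(I − P̂_r)) ≤ ∑_{i=r+1}^∞ λ_i + √(2r) ‖A − Â‖_{HS}. -/

import Mathlib

open RealInnerProductSpace

private lemma tsum_cs {f g : ℕ → ℝ} (hf : ∀ i, 0 ≤ f i) (hg : ∀ i, 0 ≤ g i)
    (hf2 : Summable (fun i => f i ^ 2)) (hg2 : Summable fun i => g i ^ 2) :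
    ∑' i, f i * g i ≤ Real.sqrt (∑' i, f i ^ 2) * Real.sqrt (∑' i, g i ^ 2) := by
  have hfg : Summable (fun i => f i * g i) := by
    refine Summable.of_nonneg_of_le (fun i => mul_nonneg (hf i) (hg i))
      (fun i => ?_) (hf2.add hg2)
    nlinarith [sq_nonneg (f i - g i)]
  refine Summable.tsum_le_of_sum_le hfg fun s => ?_
  calc ∑ i ∈ s, f i * g i ≤ Real.sqrt (∑ i ∈ s, f i ^ 2) * Real.sqrt (∑ i ∈ s, g i ^ 2) :=
        Real.sum_mul_le_sqrt_mul_sqrt s f g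
    _ ≤ _ := by
        have a1 := Real.sqrt_le_sqrt (Summable.sum_le_tsum s (fun i _ => sq_nonneg (f i)) hf2)
        have a2 := Real.sqrt_le_sqrt (Summable.sum_le_tsum s (fun i _ => sq_nonneg (g i)) hg2)
        exact mul_le_mul a1 a2 (Real.sqrt_nonneg _) (Real.sqrt_nonneg _)

private lemma summable_mul_of_sq {f g : ℕ → ℝ} (hf : ∀ i, 0 ≤ f i) (hg : ∀ i, 0 ≤ g i)
    (hf2 : Summable (fun i => f i ^ 2)) (hg2 : Summable fun i => g i ^ 2) :
    Summable (fun i => f i * g i) := by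
  refine Summable.of_nonneg_of_le (fun i => mul_nonneg (hf i) (hg i))
    (fun i => ?_) (hf2.add hg2)
  nlinarith [sq_nonneg (f i - g i)]

private lemma kyfan {μ d : ℕ → ℝ} {r : ℕ} (hμa : Antitone μ) (hμ0 : ∀ j, 0 ≤ μ j)
    (hd0 : ∀ j, 0 ≤ d j) (hd1 : ∀ j, d j ≤ 1) (hds : Summable d)
    (hμd : Summable (fun j => μ j * d j)) (hdsum : ∑' j, d j = r) :
    ∑' j, μ j * d j ≤ ∑ j ∈ Finset.range r, μ j := by
  have h1 := (Summable.sum_add_tsum_nat_add r hμd).symm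
  have h2 := (Summable.sum_add_tsum_nat_add r hds).symm
  have htail : ∑' j, d (j + r) = r - ∑ j ∈ Finset.range r, d j := by
    rw [hdsum] at h2; linarith
  have hmain : ∑' j, μ (j + r) * d (j + r) ≤ μ r * ∑' j, d (j + r) := by
    rw [← tsum_mul_left]
    exact Summable.tsum_le_tsum (fun j => mul_le_mul_of_nonneg_right (hμa le_add_self) (hd0 _))
      ((summable_nat_add_iff r).2 hμd) (((summable_nat_add_iff r).2 hds).mul_left _)
  have hfin : ∑ j ∈ Finset.range r, (μ j * d j + μ r * (1 - d j)) ≤ ∑ j ∈ Finset.range r, μ j := by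
    refine Finset.sum_le_sum fun j hj => ?_
    have hj' : μ r ≤ μ j := hμa (Nat.le_of_lt (Finset.mem_range.1 hj))
    nlinarith [hd1 j, hd0 j]
  have hexp : ∑ j ∈ Finset.range r, (μ j * d j + μ r * (1 - d j))
      = ∑ j ∈ Finset.range r, μ j * d j + μ r * (r - ∑ j ∈ Finset.range r, d j) := by
    rw [Finset.sum_add_distrib, ← Finset.mul_sum, Finset.sum_sub_distrib]
    simp [mul_sub]
  nlinarith [hμ0 r]

set_option maxHeartbeats 1000000 in
/-- Let `A` and `Ahat` be non-negative, self-adjoint, trace-class operators on a separable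
Hilbert space `H`, with Hilbert bases `u`, `uh` of eigenvectors and decreasing summable
eigenvalue sequences `lam`, `lamh`.  For `Phat` the orthogonal projection onto the span of the
top `r` eigenvectors of `Ahat`, the trace `Tr(A (I - Phat))` (computed in the eigenbasis of `A`)
is bounded by the tail sum `∑_{i≥r} lam i` plus `√(2r)` times the Hilbert–Schmidt norm of
`A - Ahat` (computed in the basis `u`). -/
theorem stmt_2 {H : Type*} [NormedAddCommGroup H] [InnerProductSpace ℝ H] [CompleteSpace H]
    (A Ahat : H →L[ℝ] H) (hA : IsSelfAdjoint A) (hAhat : IsSelfAdjoint Ahat)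
    (hposA : ∀ x : H, 0 ≤ ⟪A x, x⟫) (hposAhat : ∀ x : H, 0 ≤ ⟪Ahat x, x⟫)
    (lam lamh : ℕ → ℝ) (u uh : HilbertBasis ℕ ℝ H)
    (heigA : ∀ i, A (u i) = lam i • u i) (heigAh : ∀ i, Ahat (uh i) = lamh i • uh i)
    (hdecA : Antitone lam) (hdecAh : Antitone lamh)
    (htcA : Summable lam) (htcAh : Summable lamh)
    (r : ℕ) (Phat : H →L[ℝ] H)
    (hPhat : Phat = ∑ i : Fin r, (innerSL ℝ (uh (i : ℕ))).smulRight (uh (i : ℕ))) :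
    (∑' i, ⟪(A ∘L ((1 : H →L[ℝ] H) - Phat)) (u i), u i⟫)
      ≤ (∑' i, lam (i + r))
        + Real.sqrt (2 * r) * Real.sqrt (∑' i, ‖(A - Ahat) (u i)‖ ^ 2) := by
  classical
  have hAsym : ∀ x y : H, ⟪A x, y⟫ = ⟪x, A y⟫ := fun x y => hA.isSymmetric x y
  have hAhsym : ∀ x y : H, ⟪Ahat x, y⟫ = ⟪x, Ahat y⟫ := fun x y => hAhat.isSymmetric x y
  -- Parseval
  have hpars : ∀ (b : HilbertBasis ℕ ℝ H) (x y : H),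
      ∑' j, ⟪b j, x⟫ * ⟪b j, y⟫ = ⟪x, y⟫ := by
    intro b x y
    have := b.tsum_inner_mul_inner x y
    simp_rw [real_inner_comm (b _)] at this ⊢
    exact this
  have hpars_sum : ∀ (b : HilbertBasis ℕ ℝ H) (x y : H),
      Summable (fun j => ⟪b j, x⟫ * ⟪b j, y⟫) := by
    intro b x y
    have := b.summable_inner_mul_inner x y
    simp_rw [real_inner_comm (b _)] at this ⊢
    exact this
  have hu1 : ∀ i, ⟪u i, u i⟫ = (1 : ℝ) := by
    intro i
    rw [real_inner_self_eq_norm_sq, u.orthonormal.1 i]; norm_num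
  have huh1 : ∀ j, ⟪uh j, uh j⟫ = (1 : ℝ) := by
    intro j
    rw [real_inner_self_eq_norm_sq, uh.orthonormal.1 j]; norm_num
  -- eigen facts
  have hlamA : ∀ (i : ℕ) (x : H), ⟪u i, A x⟫ = lam i * ⟪u i, x⟫ := by
    intro i x
    rw [← hAsym, heigA, real_inner_smul_left]
  have hlamAh : ∀ (j : ℕ) (x : H), ⟪uh j, Ahat x⟫ = lamh j * ⟪uh j, x⟫ := by
    intro j x
    rw [← hAhsym, heigAh, real_inner_smul_left]
  have hlamval : ∀ i, ⟪A (u i), u i⟫ = lam i := by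
    intro i; rw [real_inner_comm, hlamA, hu1, mul_one]
  have hlamhval : ∀ j, ⟪Ahat (uh j), uh j⟫ = lamh j := by
    intro j; rw [real_inner_comm, hlamAh, huh1, mul_one]
  have hlam0 : ∀ i, 0 ≤ lam i := fun i => by rw [← hlamval i]; exact hposA _
  have hlamh0 : ∀ j, 0 ≤ lamh j := fun j => by rw [← hlamhval j]; exact hposAhat _
  -- Phat application
  have hPapp : ∀ x : H, Phat x = ∑ j ∈ Finset.range r, ⟪uh j, x⟫ • uh j := by
    intro x
    rw [hPhat, ContinuousLinearMap.sum_apply,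
      ← Fin.sum_univ_eq_sum_range (fun j => ⟪uh j, x⟫ • uh j) r]
    simp [ContinuousLinearMap.smulRight_apply, innerSL_apply_apply]
  have hPinner : ∀ x y : H, ⟪Phat x, y⟫ = ∑ j ∈ Finset.range r, ⟪uh j, x⟫ * ⟪uh j, y⟫ := by
    intro x y
    rw [hPapp, sum_inner]
    simp [real_inner_smul_left]
  set c : ℕ → ℝ := fun i => ∑ j ∈ Finset.range r, ⟪uh j, u i⟫ ^ 2 with hc
  have hcval : ∀ i, ⟪Phat (u i), u i⟫ = c i := by
    intro i; rw [hPinner]; simp [hc, sq]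
  have hc0 : ∀ i, 0 ≤ c i := fun i => Finset.sum_nonneg fun j _ => sq_nonneg _
  have hsq_uh_sum : ∀ i, Summable (fun j => ⟪uh j, u i⟫ ^ 2) := by
    intro i
    have := hpars_sum uh (u i) (u i)
    simp_rw [sq]
    exact this
  have hsq_uh_tsum : ∀ i, ∑' j, ⟪uh j, u i⟫ ^ 2 = 1 := by
    intro i
    have := hpars uh (u i) (u i)
    rw [hu1 i] at this
    simp_rw [sq]
    exact this
  have hc1 : ∀ i, c i ≤ 1 := by
    intro i
    rw [← hsq_uh_tsum i]
    exact Summable.sum_le_tsum _ (fun j _ => sq_nonneg _) (hsq_uh_sum i)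
  have hsq_u_sum : ∀ j, Summable (fun i => ⟪uh j, u i⟫ ^ 2) := by
    intro j
    have := hpars_sum u (uh j) (uh j)
    exact this.congr fun i => by rw [real_inner_comm]; ring
  have hsq_u_tsum : ∀ j, ∑' i, ⟪uh j, u i⟫ ^ 2 = 1 := by
    intro j
    have := hpars u (uh j) (uh j)
    rw [huh1 j] at this
    calc ∑' i, ⟪uh j, u i⟫ ^ 2 = ∑' i, ⟪u i, uh j⟫ * ⟪u i, uh j⟫ :=
          tsum_congr fun i => by rw [real_inner_comm]; ring
      _ = 1 := this
  have hcs : Summable c := summable_sum (fun j _ => hsq_u_sum j)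
  have hctsum : ∑' i, c i = r := by
    rw [hc, Summable.tsum_finsetSum (fun j _ => hsq_u_sum j)]
    simp [hsq_u_tsum]
  -- LHS computation
  have hterm : ∀ i, ⟪(A ∘L ((1 : H →L[ℝ] H) - Phat)) (u i), u i⟫ = lam i - lam i * c i := by
    intro i
    have he : (A ∘L ((1 : H →L[ℝ] H) - Phat)) (u i) = A (u i) - A (Phat (u i)) := by
      simp
    rw [he, inner_sub_left, hlamval]
    have h2 : ⟪A (Phat (u i)), u i⟫ = lam i * c i := by
      rw [real_inner_comm, hlamA, real_inner_comm, hcval]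
    rw [h2]
  have hsum_lc : Summable (fun i => lam i * c i) :=
    Summable.of_nonneg_of_le (fun i => mul_nonneg (hlam0 i) (hc0 i))
      (fun i => by nlinarith [hc1 i, hlam0 i, hc0 i]) htcA
  have hLHS : (∑' i, ⟪(A ∘L ((1 : H →L[ℝ] H) - Phat)) (u i), u i⟫)
      = ∑' i, lam i - ∑' i, (lam i * c i) := by
    simp_rw [hterm]
    exact Summable.tsum_sub htcA hsum_lc
  have htail : ∑' i, lam (i + r) = ∑' i, lam i - ∑ i ∈ Finset.range r, lam i := by
    have := Summable.sum_add_tsum_nat_add r htcA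
    linarith
  -- g i = ∑_{j<r} lamh j ⟪uh j, u i⟫²
  set g : ℕ → ℝ := fun i => ∑ j ∈ Finset.range r, lamh j * ⟪uh j, u i⟫ ^ 2 with hg
  have hgsum : Summable g := summable_sum (fun j _ => (hsq_u_sum j).mul_left (lamh j))
  have hgtsum : ∑' i, g i = ∑ j ∈ Finset.range r, lamh j := by
    rw [hg, Summable.tsum_finsetSum (fun j _ => (hsq_u_sum j).mul_left (lamh j))]
    refine Finset.sum_congr rfl fun j _ => ?_
    rw [tsum_mul_left, hsq_u_tsum j, mul_one]
  -- eigen-expansion of ⟪Ahat (u i), u i⟫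
  have hqsum_pt : ∀ i, Summable (fun j => lamh j * ⟪uh j, u i⟫ ^ 2) := fun i =>
    (hpars_sum uh (Ahat (u i)) (u i)).congr fun j => by rw [hlamAh]; ring
  have hqts : ∀ i, ⟪Ahat (u i), u i⟫ = ∑' j, lamh j * ⟪uh j, u i⟫ ^ 2 := by
    intro i
    rw [← hpars uh (Ahat (u i)) (u i)]
    exact (tsum_congr fun j => by rw [hlamAh]; ring)
  -- Ky Fan bound
  set dd : ℕ → ℝ := fun j => ∑ i ∈ Finset.range r, ⟪uh j, u i⟫ ^ 2 with hdd
  have hdd0 : ∀ j, 0 ≤ dd j := fun j => Finset.sum_nonneg fun i _ => sq_nonneg _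
  have hdd1 : ∀ j, dd j ≤ 1 := by
    intro j
    have h1 : ∑ i ∈ Finset.range r, ⟪uh j, u i⟫ ^ 2 ≤ ∑' i, ⟪uh j, u i⟫ ^ 2 :=
      Summable.sum_le_tsum _ (fun i _ => sq_nonneg _) (hsq_u_sum j)
    exact h1.trans_eq (hsq_u_tsum j)
  have hdds : Summable dd := summable_sum (fun i _ => hsq_uh_sum i)
  have hddtsum : ∑' j, dd j = r := by
    rw [hdd, Summable.tsum_finsetSum (fun i _ => hsq_uh_sum i)]
    simp [hsq_uh_tsum]
  have hmuld : Summable (fun j => lamh j * dd j) :=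
    Summable.of_nonneg_of_le (fun j => mul_nonneg (hlamh0 j) (hdd0 j))
      (fun j => by nlinarith [hdd1 j, hlamh0 j, hdd0 j]) htcAh
  have hkyfan : ∑ i ∈ Finset.range r, ⟪Ahat (u i), u i⟫ ≤ ∑ j ∈ Finset.range r, lamh j := by
    have h1 : ∑ i ∈ Finset.range r, ⟪Ahat (u i), u i⟫ = ∑' j, lamh j * dd j := by
      calc ∑ i ∈ Finset.range r, ⟪Ahat (u i), u i⟫
          = ∑ i ∈ Finset.range r, ∑' j, lamh j * ⟪uh j, u i⟫ ^ 2 :=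
            Finset.sum_congr rfl fun i _ => hqts i
        _ = ∑' j, ∑ i ∈ Finset.range r, lamh j * ⟪uh j, u i⟫ ^ 2 :=
            (Summable.tsum_finsetSum (fun i _ => hqsum_pt i)).symm
        _ = ∑' j, lamh j * dd j := tsum_congr fun j => by rw [hdd, Finset.mul_sum]
    rw [h1]
    exact kyfan hdecAh hlamh0 hdd0 hdd1 hdds hmuld hddtsum
  -- the operator difference applied to basis vectors
  set v : ℕ → H := fun i => if i < r then u i else 0 with hv
  have hwE : ∀ i, ⟪Phat (u i), (A - Ahat) (u i)⟫ = lam i * c i - g i := by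
    intro i
    rw [hPinner]
    have hcong : ∀ j ∈ Finset.range r, ⟪uh j, u i⟫ * ⟪uh j, (A - Ahat) (u i)⟫
        = lam i * ⟪uh j, u i⟫ ^ 2 - lamh j * ⟪uh j, u i⟫ ^ 2 := by
      intro j _
      have h1 : (A - Ahat) (u i) = A (u i) - Ahat (u i) := rfl
      rw [h1, inner_sub_right, hlamAh, heigA, real_inner_smul_right]
      ring
    rw [Finset.sum_congr rfl hcong, Finset.sum_sub_distrib, ← Finset.mul_sum]
  have hvE : ∀ i, ⟪v i, (A - Ahat) (u i)⟫
      = if i < r then lam i - ⟪Ahat (u i), u i⟫ else 0 := by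
    intro i
    by_cases h : i < r
    · have hvi : v i = u i := if_pos h
      have h1 : (A - Ahat) (u i) = A (u i) - Ahat (u i) := rfl
      rw [hvi, if_pos h, h1, inner_sub_right, ← hAsym, ← hAhsym, hlamval]
    · have hvi : v i = (0 : H) := if_neg h
      rw [hvi, if_neg h, inner_zero_left]
  have hvE_sum : Summable (fun i => ⟪v i, (A - Ahat) (u i)⟫) := by
    refine summable_of_ne_finset_zero (s := Finset.range r) fun i hi => ?_
    rw [hvE i, if_neg (by simpa using hi)]
  have hwE_sum : Summable (fun i => ⟪Phat (u i), (A - Ahat) (u i)⟫) :=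
    (hsum_lc.sub hgsum).congr fun i => (hwE i).symm
  have hT1sum : Summable (fun i => ⟪v i - Phat (u i), (A - Ahat) (u i)⟫) :=
    (hvE_sum.sub hwE_sum).congr fun i => (inner_sub_left _ _ _).symm
  have hT1 : ∑' i, ⟪v i - Phat (u i), (A - Ahat) (u i)⟫
      = (∑ i ∈ Finset.range r, (lam i - ⟪Ahat (u i), u i⟫))
        - (∑' i, (lam i * c i) - ∑ j ∈ Finset.range r, lamh j) := by
    calc ∑' i, ⟪v i - Phat (u i), (A - Ahat) (u i)⟫
        = ∑' i, (⟪v i, (A - Ahat) (u i)⟫ - ⟪Phat (u i), (A - Ahat) (u i)⟫) :=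
          tsum_congr fun i => inner_sub_left _ _ _
      _ = (∑' i, ⟪v i, (A - Ahat) (u i)⟫) - ∑' i, ⟪Phat (u i), (A - Ahat) (u i)⟫ :=
          Summable.tsum_sub hvE_sum hwE_sum
      _ = _ := by
          congr 1
          · rw [tsum_eq_sum (s := Finset.range r)
              (fun i hi => by rw [hvE i, if_neg (by simpa using hi)])]
            exact Finset.sum_congr rfl fun i hi => by
              rw [hvE i, if_pos (Finset.mem_range.1 hi)]
          · calc ∑' i, ⟪Phat (u i), (A - Ahat) (u i)⟫
                = ∑' i, (lam i * c i - g i) := tsum_congr hwE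
              _ = ∑' i, (lam i * c i) - ∑' i, g i := Summable.tsum_sub hsum_lc hgsum
              _ = _ := by rw [hgtsum]
  -- norms
  have hPfix : ∀ x : H, ∀ j ∈ Finset.range r, ⟪uh j, Phat x⟫ = ⟪uh j, x⟫ := by
    intro x j hj
    rw [real_inner_comm, hPinner]
    have hcong : ∀ k ∈ Finset.range r, ⟪uh k, x⟫ * ⟪uh k, uh j⟫
        = if k = j then ⟪uh j, x⟫ else 0 := by
      intro k _
      rcases eq_or_ne k j with h | h
      · subst h; rw [huh1, if_pos rfl, mul_one]
      · rw [if_neg h, uh.orthonormal.2 h, mul_zero]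
    rw [Finset.sum_congr rfl hcong, Finset.sum_ite_eq' (Finset.range r) j, if_pos hj]
  have hwnorm : ∀ i, ‖Phat (u i)‖ ^ 2 = c i := by
    intro i
    rw [← real_inner_self_eq_norm_sq, hPinner]
    have hcong : ∀ j ∈ Finset.range r, ⟪uh j, u i⟫ * ⟪uh j, Phat (u i)⟫
        = ⟪uh j, u i⟫ ^ 2 := fun j hj => by rw [hPfix (u i) j hj]; ring
    rw [Finset.sum_congr rfl hcong]
  have hvw : ∀ i, 0 ≤ ⟪v i, Phat (u i)⟫ := by
    intro i
    by_cases h : i < r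
    · have hvi : v i = u i := if_pos h
      have h1 : ⟪u i, Phat (u i)⟫ = c i := by rw [real_inner_comm, hcval]
      rw [hvi, h1]; exact hc0 i
    · have hvi : v i = (0 : H) := if_neg h
      rw [hvi, inner_zero_left]
  have hFbnd : ∀ i, ‖v i - Phat (u i)‖ ^ 2 ≤ (if i < r then (1:ℝ) else 0) + c i := by
    intro i
    rw [norm_sub_sq_real]
    have hv2 : ‖v i‖ ^ 2 = if i < r then (1:ℝ) else 0 := by
      by_cases h : i < r
      · have hvi : v i = u i := if_pos h
        rw [hvi, if_pos h, u.orthonormal.1 i, one_pow]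
      · have hvi : v i = (0 : H) := if_neg h
        rw [hvi, if_neg h, norm_zero]
        norm_num
    rw [hv2, hwnorm]
    nlinarith [hvw i]
  have hind_sum : Summable (fun i => if i < r then (1:ℝ) else 0) :=
    summable_of_ne_finset_zero (s := Finset.range r) fun i hi => if_neg (by simpa using hi)
  have hbnd_sum : Summable (fun i => (if i < r then (1:ℝ) else 0) + c i) := hind_sum.add hcs
  have hF2 : Summable (fun i => ‖v i - Phat (u i)‖ ^ 2) :=
    Summable.of_nonneg_of_le (fun i => sq_nonneg _) hFbnd hbnd_sum
  have hF2le : ∑' i, ‖v i - Phat (u i)‖ ^ 2 ≤ 2 * r := by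
    have h1 : ∑' i, ((if i < r then (1:ℝ) else 0) + c i) = r + r := by
      rw [Summable.tsum_add hind_sum hcs, hctsum]
      congr 1
      rw [tsum_eq_sum (s := Finset.range r) (fun i hi => if_neg (by simpa using hi))]
      have hcong : ∀ i ∈ Finset.range r, (if i < r then (1:ℝ) else 0) = 1 :=
        fun i hi => if_pos (Finset.mem_range.1 hi)
      rw [Finset.sum_congr rfl hcong]
      simp
    calc ∑' i, ‖v i - Phat (u i)‖ ^ 2 ≤ ∑' i, ((if i < r then (1:ℝ) else 0) + c i) :=
          Summable.tsum_le_tsum hFbnd hF2 hbnd_sum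
      _ = 2 * r := by rw [h1]; ring
  -- Hilbert-Schmidt summability of A - Ahat in basis u
  have hlamh2 : Summable (fun j => lamh j ^ 2) :=
    Summable.of_nonneg_of_le (fun j => sq_nonneg _)
      (fun j => by nlinarith [hdecAh (Nat.zero_le j), hlamh0 j]) (htcAh.mul_left (lamh 0))
  have hA2 : Summable (fun i => ‖A (u i)‖ ^ 2) := by
    refine (htcA.mul_left (lam 0)).of_nonneg_of_le (fun i => sq_nonneg _) fun i => ?_
    have h1 : ‖A (u i)‖ ^ 2 = lam i ^ 2 := by
      rw [heigA, norm_smul, u.orthonormal.1 i]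
      simp [sq_abs]
    rw [h1]
    nlinarith [hdecA (Nat.zero_le i), hlam0 i]
  have hAh2 : Summable (fun i => ‖Ahat (u i)‖ ^ 2) := by
    have hnorm_sum : ∀ i, Summable (fun j => lamh j ^ 2 * ⟪uh j, u i⟫ ^ 2) := fun i =>
      (hpars_sum uh (Ahat (u i)) (Ahat (u i))).congr fun j => by rw [hlamAh]; ring
    have hnorm_eq : ∀ i, ‖Ahat (u i)‖ ^ 2 = ∑' j, lamh j ^ 2 * ⟪uh j, u i⟫ ^ 2 := by
      intro i
      have h0 := hpars uh (Ahat (u i)) (Ahat (u i))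
      rw [real_inner_self_eq_norm_sq] at h0
      rw [← h0]
      exact (tsum_congr fun j => by rw [hlamAh]; ring).symm
    refine summable_of_sum_range_le (c := ∑' j, lamh j ^ 2) (fun i => sq_nonneg _) fun n => ?_
    calc ∑ i ∈ Finset.range n, ‖Ahat (u i)‖ ^ 2
        = ∑ i ∈ Finset.range n, ∑' j, lamh j ^ 2 * ⟪uh j, u i⟫ ^ 2 :=
          Finset.sum_congr rfl fun i _ => hnorm_eq i
      _ = ∑' j, ∑ i ∈ Finset.range n, lamh j ^ 2 * ⟪uh j, u i⟫ ^ 2 :=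
          (Summable.tsum_finsetSum fun i _ => hnorm_sum i).symm
      _ ≤ ∑' j, lamh j ^ 2 := by
          refine Summable.tsum_le_tsum (fun j => ?_) (summable_sum fun i _ => ?_) hlamh2
          · rw [← Finset.mul_sum]
            have h1 : ∑ i ∈ Finset.range n, ⟪uh j, u i⟫ ^ 2 ≤ 1 :=
              (Summable.sum_le_tsum _ (fun i _ => sq_nonneg _) (hsq_u_sum j)).trans_eq (hsq_u_tsum j)
            nlinarith [sq_nonneg (lamh j),
              Finset.sum_nonneg fun i (_ : i ∈ Finset.range n) => sq_nonneg ⟪uh j, u i⟫]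
          · exact hnorm_sum i
  have hE2 : Summable (fun i => ‖(A - Ahat) (u i)‖ ^ 2) := by
    refine ((hA2.add hAh2).mul_left 2).of_nonneg_of_le (fun i => sq_nonneg _) fun i => ?_
    have h1 : ‖(A - Ahat) (u i)‖ ≤ ‖A (u i)‖ + ‖Ahat (u i)‖ := by
      have h0 : (A - Ahat) (u i) = A (u i) - Ahat (u i) := rfl
      rw [h0]; exact norm_sub_le _ _
    have h2 : ‖(A - Ahat) (u i)‖ ^ 2 ≤ (‖A (u i)‖ + ‖Ahat (u i)‖) ^ 2 :=
      pow_le_pow_left₀ (norm_nonneg _) h1 2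
    nlinarith [h2, sq_nonneg (‖A (u i)‖ - ‖Ahat (u i)‖)]
  -- Cauchy-Schwarz bound on T1
  have hprod : Summable (fun i => ‖v i - Phat (u i)‖ * ‖(A - Ahat) (u i)‖) :=
    summable_mul_of_sq (fun i => norm_nonneg _) (fun i => norm_nonneg _) hF2 hE2
  have hT1le : ∑' i, ⟪v i - Phat (u i), (A - Ahat) (u i)⟫
      ≤ Real.sqrt (2 * r) * Real.sqrt (∑' i, ‖(A - Ahat) (u i)‖ ^ 2) := by
    calc ∑' i, ⟪v i - Phat (u i), (A - Ahat) (u i)⟫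
        ≤ ∑' i, ‖v i - Phat (u i)‖ * ‖(A - Ahat) (u i)‖ :=
          Summable.tsum_le_tsum (fun i => real_inner_le_norm _ _) hT1sum hprod
      _ ≤ Real.sqrt (∑' i, ‖v i - Phat (u i)‖ ^ 2)
            * Real.sqrt (∑' i, ‖(A - Ahat) (u i)‖ ^ 2) :=
          tsum_cs (fun i => norm_nonneg _) (fun i => norm_nonneg _) hF2 hE2
      _ ≤ _ :=
          mul_le_mul_of_nonneg_right (Real.sqrt_le_sqrt hF2le) (Real.sqrt_nonneg _)
  -- assemble
  have hA_head : ∑ i ∈ Finset.range r, (lam i - ⟪Ahat (u i), u i⟫)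
      = ∑ i ∈ Finset.range r, lam i - ∑ i ∈ Finset.range r, ⟪Ahat (u i), u i⟫ :=
    Finset.sum_sub_distrib _ _
  have hcore : ∑ i ∈ Finset.range r, lam i - ∑' i, (lam i * c i)
      ≤ Real.sqrt (2 * r) * Real.sqrt (∑' i, ‖(A - Ahat) (u i)‖ ^ 2) := by
    have h2 := hT1le
    rw [hT1, hA_head] at h2
    linarith [hkyfan]
  rw [hLHS, htail]
  linarith [hcore]
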